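/- Let c and h be distinct monotone conjunctions over {0,1}^n with m ≥ 1 shared variables, u ≥ 1 variables only in c, and w ≥ 1 variables only in h. Define Rob = E_{x uniform} [ min { HD(x,x') : h(x') ≠ c(x') } ]. Then Rob ≥ min(|h|,|c|)/16, where |h| = m+w and |c| = m+u. -/

import Mathlib

open Finset

namespace ERrob

variable {n : ℕ}

noncomputable def e (i : Fin n) (x : Fin n → Bool) : ℝ := if x i then 0 else 1

lemma e_nonneg (i : Fin n) (x : Fin n → Bool) : 0 ≤ e i x := by
  unfold e; split <;> norm_num

lemma e_le_one (i : Fin n) (x : Fin n → Bool) : e i x ≤ 1 := by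
  unfold e; split <;> norm_num

/-- flip at coordinate i -/
def flip (i : Fin n) (x : Fin n → Bool) : Fin n → Bool := Function.update x i (!x i)

lemma flip_involutive (i : Fin n) : Function.Involutive (flip i) := by
  intro x
  funext j
  by_cases h : j = i
  · subst h; simp [flip]
  · simp [flip, Function.update_of_ne h]

lemma e_flip_self (i : Fin n) (x : Fin n → Bool) : e i (flip i x) = 1 - e i x := by
  unfold e flip
  simp only [Function.update_self]
  cases x i <;> norm_num

lemma e_flip_ne (i j : Fin n) (h : j ≠ i) (x : Fin n → Bool) : e j (flip i x) = e j x := by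
  unfold e flip
  rw [Function.update_of_ne h]

lemma sum_e (i : Fin n) : ∑ x : Fin n → Bool, e i x = 2 ^ n / 2 := by
  have h1 : ∑ x : Fin n → Bool, e i (flip i x) = ∑ x : Fin n → Bool, e i x :=
    Function.Bijective.sum_comp (flip_involutive i).bijective _
  have h2 : ∑ x : Fin n → Bool, (e i x + e i (flip i x)) = (2:ℝ) ^ n := by
    have : ∀ x : Fin n → Bool, e i x + e i (flip i x) = 1 := by
      intro x; rw [e_flip_self]; ring
    simp only [this, Finset.sum_const, Finset.card_univ]
    simp [Fintype.card_fun]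
  rw [Finset.sum_add_distrib, h1] at h2
  linarith

lemma sum_e_mul_e (i j : Fin n) (h : i ≠ j) :
    ∑ x : Fin n → Bool, e i x * e j x = 2 ^ n / 4 := by
  have h1 : ∑ x : Fin n → Bool, e i (flip i x) * e j (flip i x)
      = ∑ x : Fin n → Bool, e i x * e j x :=
    Function.Bijective.sum_comp (flip_involutive i).bijective (fun y => e i y * e j y)
  have h2 : ∑ x : Fin n → Bool, (e i x * e j x + e i (flip i x) * e j (flip i x))
      = ∑ x : Fin n → Bool, e j x := by
    apply Finset.sum_congr rfl
    intro x _
    rw [e_flip_self, e_flip_ne i j (Ne.symm h)]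
    ring
  rw [Finset.sum_add_distrib, h1, sum_e] at h2
  linarith

lemma sum_e_sq (i : Fin n) : ∑ x : Fin n → Bool, e i x * e i x = 2 ^ n / 2 := by
  have : ∀ x : Fin n → Bool, e i x * e i x = e i x := by
    intro x; unfold e; split <;> norm_num
  simp only [this, sum_e]


noncomputable def Z (S : Finset (Fin n)) (x : Fin n → Bool) : ℝ := ∑ i ∈ S, e i x




lemma sum_Z (S : Finset (Fin n)) : ∑ x : Fin n → Bool, Z S x = S.card * (2 ^ n / 2) := by
  unfold Z
  rw [Finset.sum_comm]
  simp only [sum_e, Finset.sum_const, nsmul_eq_mul]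

lemma sum_Z_mul_Z (S T : Finset (Fin n)) (hST : Disjoint S T) :
    ∑ x : Fin n → Bool, Z S x * Z T x = S.card * T.card * (2 ^ n / 4) := by
  unfold Z
  have : ∀ x : Fin n → Bool, (∑ i ∈ S, e i x) * (∑ j ∈ T, e j x)
      = ∑ i ∈ S, ∑ j ∈ T, e i x * e j x := fun x => Finset.sum_mul_sum _ _ _ _
  simp only [this]
  rw [Finset.sum_comm]
  have : ∀ i ∈ S, ∑ x : Fin n → Bool, ∑ j ∈ T, e i x * e j x = T.card * (2^n/4) := by
    intro i hi
    rw [Finset.sum_comm]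
    have : ∀ j ∈ T, ∑ x : Fin n → Bool, e i x * e j x = 2^n/4 := by
      intro j hj
      exact sum_e_mul_e i j (by rintro rfl; exact hST.forall_ne_finset hi hj rfl)
    rw [Finset.sum_congr rfl this]
    simp [mul_comm]
  rw [Finset.sum_congr rfl this]
  simp; ring
lemma sum_Z_sq (S : Finset (Fin n)) :
    ∑ x : Fin n → Bool, Z S x * Z S x
      = S.card * (2 ^ n / 2) + (S.card * (S.card - 1)) * (2 ^ n / 4) := by
  unfold Z
  have h1 : ∀ x : Fin n → Bool, (∑ i ∈ S, e i x) * (∑ j ∈ S, e j x)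
      = ∑ i ∈ S, ∑ j ∈ S, e i x * e j x := fun x => Finset.sum_mul_sum _ _ _ _
  simp only [h1]
  rw [Finset.sum_comm]
  have h2 : ∀ i ∈ S, ∑ x : Fin n → Bool, ∑ j ∈ S, e i x * e j x
      = 2^n/2 + ((S.card : ℝ) - 1) * (2^n/4) := by
    intro i hi
    rw [Finset.sum_comm, ← Finset.add_sum_erase _ _ hi, sum_e_sq]
    have : ∀ j ∈ S.erase i, ∑ x : Fin n → Bool, e i x * e j x = 2^n/4 := by
      intro j hj
      exact sum_e_mul_e i j (Finset.ne_of_mem_erase hj).symm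
    rw [Finset.sum_congr rfl this, Finset.sum_const, Finset.card_erase_of_mem hi, nsmul_eq_mul]
    have hS : (1:ℕ) ≤ S.card := Finset.card_pos.mpr ⟨i, hi⟩
    push_cast [hS]
    ring
  rw [Finset.sum_congr rfl h2]
  simp; ring

lemma sum_min_Z (k : ℕ) (hk : 1 ≤ k) (B' C' : Finset (Fin n)) (hd : Disjoint B' C')
    (hB : B'.card = k) (hC : C'.card = k) :
    (k : ℝ) / 16 * 2 ^ n ≤ ∑ x : Fin n → Bool, min (Z B' x) (Z C' x) := by
  set Δ : (Fin n → Bool) → ℝ := fun x => Z B' x - Z C' x with hΔ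
  have hsq : ∑ x : Fin n → Bool, Δ x ^ 2 = k * 2 ^ n / 2 := by
    have : ∀ x : Fin n → Bool, Δ x ^ 2
        = Z B' x * Z B' x - 2 * (Z B' x * Z C' x) + Z C' x * Z C' x := by
      intro x; simp only [hΔ]; ring
    rw [Finset.sum_congr rfl (fun x _ => this x)]
    rw [Finset.sum_add_distrib, Finset.sum_sub_distrib, ← Finset.mul_sum,
      sum_Z_sq, sum_Z_sq, sum_Z_mul_Z _ _ hd, hB, hC]
    ring
  have habs : ∑ x : Fin n → Bool, |Δ x| ≤ 7 * k / 8 * 2 ^ n := by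
    have hcs := Finset.sum_mul_sq_le_sq_mul_sq Finset.univ (fun x => |Δ x|) (fun _ => 1)
    simp only [mul_one, one_pow, Finset.sum_const, Finset.card_univ, sq_abs,
      nsmul_eq_mul, mul_one] at hcs
    have hcard : (Fintype.card (Fin n → Bool) : ℝ) = 2 ^ n := by
      simp [Fintype.card_fun]
    rw [hcard] at hcs
    have h2 : (∑ x : Fin n → Bool, |Δ x|) ^ 2 ≤ (7 * k / 8 * 2 ^ n) ^ 2 := by
      calc (∑ x : Fin n → Bool, |Δ x|) ^ 2
          ≤ (∑ x : Fin n → Bool, Δ x ^ 2) * 2 ^ n := hcs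
        _ = k * 2 ^ n / 2 * 2 ^ n := by rw [hsq]
        _ ≤ (7 * k / 8 * 2 ^ n) ^ 2 := by
          have hk1 : (1:ℝ) ≤ k := by exact_mod_cast hk
          have h2n : (0:ℝ) < 2 ^ n := by positivity
          nlinarith [h2n.le, hk1, sq_nonneg ((2:ℝ)^n), mul_pos h2n h2n,
            mul_le_mul_of_nonneg_right (mul_le_mul_of_nonneg_right hk1 h2n.le) h2n.le]
    have hnn : (0:ℝ) ≤ 7 * k / 8 * 2 ^ n := by positivity
    exact le_of_pow_le_pow_left₀ two_ne_zero hnn h2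
  have hmin : ∀ x : Fin n → Bool, min (Z B' x) (Z C' x)
      = (Z B' x + Z C' x - |Δ x|) / 2 := by
    intro x
    simp only [hΔ]
    rcases le_total (Z B' x) (Z C' x) with h | h
    · rw [min_eq_left h, abs_of_nonpos (by linarith)]; ring
    · rw [min_eq_right h, abs_of_nonneg (by linarith)]; ring
  rw [Finset.sum_congr rfl fun x _ => hmin x]
  have : ∑ x : Fin n → Bool, (Z B' x + Z C' x - |Δ x|) / 2
      = ((∑ x : Fin n → Bool, Z B' x) + (∑ x : Fin n → Bool, Z C' x)
        - ∑ x : Fin n → Bool, |Δ x|) / 2 := by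
    rw [← Finset.sum_div, Finset.sum_sub_distrib, Finset.sum_add_distrib]
  rw [this, sum_Z, sum_Z, hB, hC]
  have h2n : (0:ℝ) < 2 ^ n := by positivity
  nlinarith [habs]

-- per-x lower bound on sInf, with subsets B' ⊆ B, C' ⊆ C
lemma sInf_lb (A B C B' C' : Finset (Fin n))
    (hAB : Disjoint A B) (hAC : Disjoint A C) (hBC : Disjoint B C)
    (hBne : B.Nonempty) (hCne : C.Nonempty)
    (hB' : B' ⊆ B) (hC' : C' ⊆ C) (x : Fin n → Bool) :
    (A.filter fun i => x i = false).card
      + min ((B'.filter fun i => x i = false).card) ((C'.filter fun i => x i = false).card)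
    ≤ sInf {d : ℕ | ∃ x' : Fin n → Bool,
        ¬((∀ i ∈ A ∪ C, x' i = true) ↔ (∀ i ∈ A ∪ B, x' i = true)) ∧
        hammingDist x x' = d} := by
  have hdist : ∀ x' : Fin n → Bool,
      hammingDist x x' = (Finset.univ.filter fun i => x i ≠ x' i).card := fun _ => rfl
  apply le_csInf
  · -- nonempty
    refine ⟨hammingDist x (fun i => decide (i ∈ A ∪ C)), fun i => decide (i ∈ A ∪ C), ?_, rfl⟩
    intro hiff
    obtain ⟨b, hb⟩ := hBne
    have hbAC : b ∉ A ∪ C := by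
      simp only [Finset.mem_union]
      push_neg
      exact ⟨fun h => (hAB.forall_ne_finset h hb) rfl, fun h => (hBC.forall_ne_finset hb h) rfl⟩
    have := hiff.mp (fun i hi => by simp [hi]) b (Finset.mem_union_right _ hb)
    simp [hbAC] at this
  · rintro d ⟨x', hne, rfl⟩
    rw [hdist]
    by_cases hP : ∀ i ∈ A ∪ C, x' i = true
    · -- then ¬Q; all of A ∪ C are true in x'
      have hsub : ((A ∪ C').filter fun i => x i = false) ⊆
          (Finset.univ.filter fun i => x i ≠ x' i) := by
        intro i hi
        simp only [Finset.mem_filter] at hi ⊢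
        have hiu : i ∈ A ∪ C := by
          rcases Finset.mem_union.mp hi.1 with h | h
          · exact Finset.mem_union_left _ h
          · exact Finset.mem_union_right _ (hC' h)
        exact ⟨Finset.mem_univ _, by rw [hi.2, hP i hiu]; simp⟩
      have hcard := Finset.card_le_card hsub
      rw [Finset.filter_union, Finset.card_union_of_disjoint] at hcard
      · exact le_trans (Nat.add_le_add_left (min_le_right _ _) _) hcard
      · exact Finset.disjoint_filter_filter (hAC.mono_right hC')
    · -- then Q holds
      have hQ : ∀ i ∈ A ∪ B, x' i = true := by
        by_contra hQ'
        exact hne ⟨fun h => absurd h hP, fun h => absurd h hQ'⟩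
      have hsub : ((A ∪ B').filter fun i => x i = false) ⊆
          (Finset.univ.filter fun i => x i ≠ x' i) := by
        intro i hi
        simp only [Finset.mem_filter] at hi ⊢
        have hiu : i ∈ A ∪ B := by
          rcases Finset.mem_union.mp hi.1 with h | h
          · exact Finset.mem_union_left _ h
          · exact Finset.mem_union_right _ (hB' h)
        exact ⟨Finset.mem_univ _, by rw [hi.2, hQ i hiu]; simp⟩
      have hcard := Finset.card_le_card hsub
      rw [Finset.filter_union, Finset.card_union_of_disjoint] at hcard
      · exact le_trans (Nat.add_le_add_left (min_le_left _ _) _) hcard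
      · exact Finset.disjoint_filter_filter (hAB.mono_right hB')

lemma Z_eq_card (S : Finset (Fin n)) (x : Fin n → Bool) :
    Z S x = ((S.filter fun i => x i = false).card : ℝ) := by
  unfold Z
  have he : ∀ i, e i x = if x i = false then (1:ℝ) else 0 := by
    intro i; unfold e; cases h : x i <;> simp
  simp only [he]
  rw [Finset.sum_boole]

end ERrob

open ERrob in
/-- Error-region robustness lower bound for two distinct monotone conjunctions with
`m ≥ 1` shared, `u ≥ 1` only-in-`c`, and `w ≥ 1` only-in-`h` variables. -/
theorem ER_robustness_lower (n m u w : ℕ) (hm : 1 ≤ m) (hu : 1 ≤ u) (hw : 1 ≤ w)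
    (A B C : Finset (Fin n))
    (hAB : Disjoint A B) (hAC : Disjoint A C) (hBC : Disjoint B C)
    (hA : A.card = m) (hB : B.card = u) (hC : C.card = w)
    (hle : m + u + w ≤ n) :
    (min (m + w) (m + u) : ℝ) / 16 ≤
      (∑ x : Fin n → Bool,
        ((sInf {d : ℕ | ∃ x' : Fin n → Bool,
            ¬((∀ i ∈ A ∪ C, x' i = true) ↔ (∀ i ∈ A ∪ B, x' i = true)) ∧
            hammingDist x x' = d} : ℕ) : ℝ)) / 2 ^ n := by
  set k := min u w with hk
  have hk1 : 1 ≤ k := le_min hu hw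
  obtain ⟨B', hB'sub, hB'card⟩ := Finset.exists_subset_card_eq (s := B) (n := k) (hB ▸ min_le_left u w)
  obtain ⟨C', hC'sub, hC'card⟩ := Finset.exists_subset_card_eq (s := C) (n := k) (hC ▸ min_le_right u w)
  have hB'C' : Disjoint B' C' := hBC.mono hB'sub hC'sub
  have hBne : B.Nonempty := Finset.card_pos.mp (hB ▸ hu)
  have hCne : C.Nonempty := Finset.card_pos.mp (hC ▸ hw)
  have h2n : (0:ℝ) < 2 ^ n := by positivity
  -- pointwise bound
  have hpt : ∀ x : Fin n → Bool,
      Z A x + min (Z B' x) (Z C' x) ≤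
      ((sInf {d : ℕ | ∃ x' : Fin n → Bool,
            ¬((∀ i ∈ A ∪ C, x' i = true) ↔ (∀ i ∈ A ∪ B, x' i = true)) ∧
            hammingDist x x' = d} : ℕ) : ℝ) := by
    intro x
    have := sInf_lb A B C B' C' hAB hAC hBC hBne hCne hB'sub hC'sub x
    have hcast := (Nat.cast_le (α := ℝ)).mpr this
    push_cast [Nat.cast_min] at hcast
    rw [Z_eq_card, Z_eq_card, Z_eq_card]
    exact hcast
  -- sum bound
  have hsum : ((m:ℝ) + k) / 16 * 2 ^ n ≤
      ∑ x : Fin n → Bool,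
        ((sInf {d : ℕ | ∃ x' : Fin n → Bool,
            ¬((∀ i ∈ A ∪ C, x' i = true) ↔ (∀ i ∈ A ∪ B, x' i = true)) ∧
            hammingDist x x' = d} : ℕ) : ℝ) := by
    have h1 : ∑ x : Fin n → Bool, (Z A x + min (Z B' x) (Z C' x)) ≤
        ∑ x : Fin n → Bool,
        ((sInf {d : ℕ | ∃ x' : Fin n → Bool,
            ¬((∀ i ∈ A ∪ C, x' i = true) ↔ (∀ i ∈ A ∪ B, x' i = true)) ∧
            hammingDist x x' = d} : ℕ) : ℝ) :=
      Finset.sum_le_sum fun x _ => hpt x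
    refine le_trans ?_ h1
    rw [Finset.sum_add_distrib, sum_Z, hA]
    have h2 := sum_min_Z k hk1 B' C' hB'C' hB'card hC'card
    have hm1 : (1:ℝ) ≤ m := by exact_mod_cast hm
    nlinarith [h2]
  rw [le_div_iff₀ h2n]
  refine le_trans ?_ hsum
  have hmin : (min (m + w) (m + u) : ℝ) = (m:ℝ) + min w u := by
    push_cast
    rw [min_add_add_left]
  rw [hmin]
  have hwu : w ⊓ u = k := by rw [hk, min_comm]
  rw [hwu]
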